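/- Under the factor-model setup, the squared correlation between the model prediction and the proxy-horizon return satisfies Cov(ŷ, rδ)² / (Var(ŷ) · Var(rδ)) = α_δ⁴ / ((α_δ² + d·v) · (α_δ² + σδ²)); in particular Cov(ŷ, rδ) = α_δ². -/

import Mathlib

open MeasureTheory ProbabilityTheory

lemma l2_mul_integrable {Ω : Type*} [MeasurableSpace Ω] {μ : Measure Ω} {f g : Ω → ℝ}
    (hf : MemLp f 2 μ) (hg : MemLp g 2 μ) : Integrable (fun ω => f ω * g ω) μ := by
  have h := hf.smul (p := 2) (r := 1) hg (hpqr := ⟨by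
    rw [inv_one, ENNReal.inv_two_add_inv_two]⟩)
  rw [memLp_one_iff_integrable] at h
  rw [smul_eq_mul, mul_comm] at h
  exact h

/-- Under the factor-model setup, with prediction
`ŷ = Σ_i (α_δ·w_i + z_i)·s_i` and proxy-horizon return `rδ = α_δ·(Σ_i w_i·s_i) + εδ`,
the squared correlation satisfies
`Cov(ŷ, rδ)² / (Var(ŷ)·Var(rδ)) = α_δ⁴ / ((α_δ² + d·v)·(α_δ² + σδ²))`;
in particular `Cov(ŷ, rδ) = α_δ²`. -/
theorem squared_correlation_proxy
    {Ω : Type*} [MeasurableSpace Ω] (μ : Measure Ω) [IsProbabilityMeasure μ]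
    {d : ℕ} (hd : 1 ≤ d)
    (w : Fin d → ℝ) (hw : ∑ i, w i ^ 2 = 1)
    (αδ v σδsq : ℝ) (hαδ : 0 < αδ) (hv : 0 < v) (hσ : 0 < σδsq)
    (s z : Ω → Fin d → ℝ) (ε : Ω → ℝ)
    (hs_meas : Measurable s) (hz_meas : Measurable z) (hε_meas : Measurable ε)
    (hs2 : ∀ i, MemLp (fun ω => s ω i) 2 μ)
    (hz2 : ∀ i, MemLp (fun ω => z ω i) 2 μ)
    (hε2 : MemLp ε 2 μ)
    (hs0 : ∀ i, ∫ ω, s ω i ∂μ = 0)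
    (hscov : ∀ i j, ∫ ω, s ω i * s ω j ∂μ = if i = j then 1 else 0)
    (hz0 : ∀ i, ∫ ω, z ω i ∂μ = 0)
    (hzcov : ∀ i j, ∫ ω, z ω i * z ω j ∂μ = if i = j then v else 0)
    (hε0 : ∫ ω, ε ω ∂μ = 0)
    (hεvar : ∫ ω, ε ω ^ 2 ∂μ = σδsq)
    (hindep_sz : IndepFun s z μ)
    (hindep_ε : IndepFun (fun ω => (s ω, z ω)) ε μ) :
    (∫ ω, (∑ i, (αδ * w i + z ω i) * s ω i) * (αδ * (∑ i, w i * s ω i) + ε ω) ∂μ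
        = αδ ^ 2)
    ∧ (∫ ω, (∑ i, (αδ * w i + z ω i) * s ω i) * (αδ * (∑ i, w i * s ω i) + ε ω) ∂μ) ^ 2
        / ((∫ ω, (∑ i, (αδ * w i + z ω i) * s ω i) ^ 2 ∂μ)
           * (∫ ω, (αδ * (∑ i, w i * s ω i) + ε ω) ^ 2 ∂μ))
      = αδ ^ 4 / ((αδ ^ 2 + d * v) * (αδ ^ 2 + σδsq)) := by
  -- basic measurability
  have hsm : ∀ i, Measurable fun ω => s ω i := fun i => (measurable_pi_apply i).comp hs_meas
  have hzm : ∀ i, Measurable fun ω => z ω i := fun i => (measurable_pi_apply i).comp hz_meas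
  have ham : ∀ i, Measurable fun ω => αδ * w i + z ω i := fun i => measurable_const.add (hzm i)
  have ha2 : ∀ i, MemLp (fun ω => αδ * w i + z ω i) 2 μ :=
    fun i => (memLp_const (αδ * w i)).add (hz2 i)
  have hεint : Integrable ε μ := hε2.integrable one_le_two
  have hint_s : ∀ i, Integrable (fun ω => s ω i) μ := fun i => (hs2 i).integrable one_le_two
  have hint_z : ∀ i, Integrable (fun ω => z ω i) μ := fun i => (hz2 i).integrable one_le_two
  have hint_a : ∀ i, Integrable (fun ω => αδ * w i + z ω i) μ :=
    fun i => (ha2 i).integrable one_le_two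
  have hint_ss : ∀ i j, Integrable (fun ω => s ω i * s ω j) μ :=
    fun i j => l2_mul_integrable (hs2 i) (hs2 j)
  have hint_aa : ∀ i j, Integrable (fun ω => (αδ * w i + z ω i) * (αδ * w j + z ω j)) μ :=
    fun i j => l2_mul_integrable (ha2 i) (ha2 j)
  -- independence of functions of z and functions of s
  have indep_zs : ∀ (φ ψ : (Fin d → ℝ) → ℝ), Measurable φ → Measurable ψ →
      IndepFun (fun ω => φ (z ω)) (fun ω => ψ (s ω)) μ :=
    fun φ ψ hφ hψ => (hindep_sz.comp hψ hφ).symm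
  have indep_ε' : ∀ (φ : ((Fin d → ℝ) × (Fin d → ℝ)) → ℝ), Measurable φ →
      IndepFun (fun ω => φ (s ω, z ω)) ε μ :=
    fun φ hφ => hindep_ε.comp hφ measurable_id
  -- mean of a i
  have hmean_a : ∀ i, ∫ ω, (αδ * w i + z ω i) ∂μ = αδ * w i := by
    intro i
    rw [integral_add (integrable_const _) (hint_z i), integral_const, hz0 i]
    simp
  -- ∫ a_i * (s_i * s_j) = αδ w_i δ_ij
  have key2 : ∀ i j, ∫ ω, (αδ * w i + z ω i) * (s ω i * s ω j) ∂μ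
      = αδ * w i * (if i = j then 1 else 0) := by
    intro i j
    have hI : IndepFun (fun ω => αδ * w i + z ω i) (fun ω => s ω i * s ω j) μ :=
      indep_zs (fun x => αδ * w i + x i) (fun x => x i * x j)
        (measurable_const.add (measurable_pi_apply i))
        ((measurable_pi_apply i).mul (measurable_pi_apply j))
    have h := hI.integral_fun_mul_eq_mul_integral (ham i).aestronglyMeasurable
      ((hsm i).mul (hsm j)).aestronglyMeasurable
    exact h.trans (by rw [hmean_a i, hscov i j])
  -- ∫ a_i a_j = αδ² w_i w_j + v δ_ij
  have hmean_aa : ∀ i j, ∫ ω, (αδ * w i + z ω i) * (αδ * w j + z ω j) ∂μ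
      = αδ ^ 2 * (w i * w j) + (if i = j then v else 0) := by
    intro i j
    have hpt : ∀ ω, (αδ * w i + z ω i) * (αδ * w j + z ω j)
        = αδ ^ 2 * (w i * w j) + (αδ * w i * z ω j + (αδ * w j * z ω i + z ω i * z ω j)) := by
      intro ω; ring
    have I3 : Integrable (fun ω => αδ * w j * z ω i + z ω i * z ω j) μ :=
      ((hint_z i).const_mul _).add (l2_mul_integrable (hz2 i) (hz2 j))
    have I2 : Integrable (fun ω => αδ * w i * z ω j
        + (αδ * w j * z ω i + z ω i * z ω j)) μ := ((hint_z j).const_mul _).add I3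
    simp only [hpt]
    rw [integral_add (integrable_const _) I2,
      integral_add ((hint_z j).const_mul _) I3,
      integral_add ((hint_z i).const_mul _) (l2_mul_integrable (hz2 i) (hz2 j))]
    simp [integral_const_mul, hz0, hzcov i j]
  -- ∫ (a_i a_j)(s_i s_j) = (∫ a_i a_j) δ_ij
  have key1 : ∀ i j, ∫ ω, ((αδ * w i + z ω i) * (αδ * w j + z ω j)) * (s ω i * s ω j) ∂μ
      = (αδ ^ 2 * (w i * w j) + (if i = j then v else 0)) * (if i = j then 1 else 0) := by
    intro i j
    have hI : IndepFun (fun ω => (αδ * w i + z ω i) * (αδ * w j + z ω j))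
        (fun ω => s ω i * s ω j) μ :=
      indep_zs (fun x => (αδ * w i + x i) * (αδ * w j + x j)) (fun x => x i * x j)
        ((measurable_const.add (measurable_pi_apply i)).mul
          (measurable_const.add (measurable_pi_apply j)))
        ((measurable_pi_apply i).mul (measurable_pi_apply j))
    have h := hI.integral_fun_mul_eq_mul_integral ((ham i).mul (ham j)).aestronglyMeasurable
      ((hsm i).mul (hsm j)).aestronglyMeasurable
    exact h.trans (by rw [hmean_aa i j, hscov i j])
  -- the prediction Y is integrable
  have hint_Y : Integrable (fun ω => ∑ i, (αδ * w i + z ω i) * s ω i) μ :=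
    integrable_finset_sum _ fun i _ => l2_mul_integrable (ha2 i) (hs2 i)
  have hint_T : Integrable (fun ω => ∑ i, w i * s ω i) μ :=
    integrable_finset_sum _ fun i _ => (hint_s i).const_mul _
  -- ∫ Y ε = 0
  have hYε : ∫ ω, (∑ i, (αδ * w i + z ω i) * s ω i) * ε ω ∂μ = 0 := by
    have hI : IndepFun (fun ω => ∑ i, (αδ * w i + z ω i) * s ω i) ε μ :=
      indep_ε' (fun p => ∑ i, (αδ * w i + p.2 i) * p.1 i)
        (Finset.measurable_sum _ fun i _ =>
          (measurable_const.add ((measurable_pi_apply i).comp measurable_snd)).mul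
            ((measurable_pi_apply i).comp measurable_fst))
    have h := hI.integral_fun_mul_eq_mul_integral hint_Y.aestronglyMeasurable hε_meas.aestronglyMeasurable
    rw [hε0, mul_zero] at h
    exact h
  -- ∫ T ε = 0
  have hTε : ∫ ω, (∑ i, w i * s ω i) * ε ω ∂μ = 0 := by
    have hI : IndepFun (fun ω => ∑ i, w i * s ω i) ε μ :=
      indep_ε' (fun p => ∑ i, w i * p.1 i)
        (Finset.measurable_sum _ fun i _ =>
          ((measurable_pi_apply i).comp measurable_fst).const_mul _)
    have h := hI.integral_fun_mul_eq_mul_integral hint_T.aestronglyMeasurable hε_meas.aestronglyMeasurable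
    rw [hε0, mul_zero] at h
    exact h
  -- integrability of cross terms
  have hint_ass : ∀ i j, Integrable (fun ω => (αδ * w i + z ω i) * (s ω i * s ω j)) μ := by
    intro i j
    exact IndepFun.integrable_mul
      (indep_zs (fun x => αδ * w i + x i) (fun x => x i * x j)
        (measurable_const.add (measurable_pi_apply i))
        ((measurable_pi_apply i).mul (measurable_pi_apply j)))
      (hint_a i) (hint_ss i j)
  have hint_aass : ∀ i j,
      Integrable (fun ω => ((αδ * w i + z ω i) * (αδ * w j + z ω j)) * (s ω i * s ω j)) μ := by
    intro i j
    exact IndepFun.integrable_mul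
      (indep_zs (fun x => (αδ * w i + x i) * (αδ * w j + x j)) (fun x => x i * x j)
        ((measurable_const.add (measurable_pi_apply i)).mul
          (measurable_const.add (measurable_pi_apply j)))
        ((measurable_pi_apply i).mul (measurable_pi_apply j)))
      (hint_aa i j) (hint_ss i j)
  have hint_Yε : Integrable (fun ω => (∑ i, (αδ * w i + z ω i) * s ω i) * ε ω) μ :=
    IndepFun.integrable_mul
      (indep_ε' (fun p => ∑ i, (αδ * w i + p.2 i) * p.1 i)
        (Finset.measurable_sum _ fun i _ =>
          (measurable_const.add ((measurable_pi_apply i).comp measurable_snd)).mul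
            ((measurable_pi_apply i).comp measurable_fst)))
      hint_Y hεint
  have hint_Tε : Integrable (fun ω => (∑ i, w i * s ω i) * ε ω) μ :=
    IndepFun.integrable_mul
      (indep_ε' (fun p => ∑ i, w i * p.1 i)
        (Finset.measurable_sum _ fun i _ =>
          ((measurable_pi_apply i).comp measurable_fst).const_mul _))
      hint_T hεint
  -- COVARIANCE
  have hcov : ∫ ω, (∑ i, (αδ * w i + z ω i) * s ω i) * (αδ * (∑ i, w i * s ω i) + ε ω) ∂μ
      = αδ ^ 2 := by
    have hpt : ∀ ω, (∑ i, (αδ * w i + z ω i) * s ω i) * (αδ * (∑ i, w i * s ω i) + ε ω)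
        = (∑ i, ∑ j, (αδ * w j) * ((αδ * w i + z ω i) * (s ω i * s ω j)))
          + (∑ i, (αδ * w i + z ω i) * s ω i) * ε ω := by
      intro ω
      rw [mul_add]
      congr 1
      rw [Finset.sum_mul]
      refine Finset.sum_congr rfl fun i _ => ?_
      rw [Finset.mul_sum, Finset.mul_sum]
      exact Finset.sum_congr rfl fun j _ => by ring
    have I1 : Integrable
        (fun ω => ∑ i, ∑ j, (αδ * w j) * ((αδ * w i + z ω i) * (s ω i * s ω j))) μ :=
      integrable_finset_sum _ fun i _ => integrable_finset_sum _ fun j _ =>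
        ((hint_ass i j).const_mul _)
    simp only [hpt]
    rw [integral_add I1 hint_Yε, hYε, add_zero,
      integral_finset_sum _ (fun i _ => integrable_finset_sum _ fun j _ =>
        ((hint_ass i j).const_mul _))]
    have : ∀ i, ∫ ω, ∑ j, (αδ * w j) * ((αδ * w i + z ω i) * (s ω i * s ω j)) ∂μ
        = αδ ^ 2 * w i ^ 2 := by
      intro i
      rw [integral_finset_sum _ fun j _ => ((hint_ass i j).const_mul _)]
      have : ∀ j, ∫ ω, (αδ * w j) * ((αδ * w i + z ω i) * (s ω i * s ω j)) ∂μ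
          = (αδ * w j) * (αδ * w i * (if i = j then 1 else 0)) := by
        intro j
        rw [integral_const_mul, key2 i j]
      simp only [this, mul_ite, mul_one, mul_zero, Finset.sum_ite_eq, Finset.mem_univ, if_true]
      ring
    simp only [this, ← Finset.mul_sum, hw, mul_one]
  -- VARIANCE OF Y
  have hvarY : ∫ ω, (∑ i, (αδ * w i + z ω i) * s ω i) ^ 2 ∂μ = αδ ^ 2 + d * v := by
    have hpt : ∀ ω, (∑ i, (αδ * w i + z ω i) * s ω i) ^ 2
        = ∑ i, ∑ j, ((αδ * w i + z ω i) * (αδ * w j + z ω j)) * (s ω i * s ω j) := by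
      intro ω
      rw [sq, Finset.sum_mul_sum]
      exact Finset.sum_congr rfl fun i _ => Finset.sum_congr rfl fun j _ => by ring
    simp only [hpt]
    rw [integral_finset_sum _ (fun i _ => integrable_finset_sum _ fun j _ => hint_aass i j)]
    have : ∀ i, ∫ ω, ∑ j, ((αδ * w i + z ω i) * (αδ * w j + z ω j)) * (s ω i * s ω j) ∂μ
        = αδ ^ 2 * w i ^ 2 + v := by
      intro i
      rw [integral_finset_sum _ fun j _ => hint_aass i j]
      simp only [key1, mul_ite, mul_one, mul_zero, Finset.sum_ite_eq, Finset.mem_univ, if_true]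
      ring
    simp only [this]
    rw [Finset.sum_add_distrib, ← Finset.mul_sum, hw, Finset.sum_const, Finset.card_univ,
      Fintype.card_fin, nsmul_eq_mul, mul_one]
  -- VARIANCE OF R
  have hvarR : ∫ ω, (αδ * (∑ i, w i * s ω i) + ε ω) ^ 2 ∂μ = αδ ^ 2 + σδsq := by
    have hpt : ∀ ω, (αδ * (∑ i, w i * s ω i) + ε ω) ^ 2
        = (∑ i, ∑ j, (αδ ^ 2 * (w i * w j)) * (s ω i * s ω j))
          + ((2 * αδ) * ((∑ i, w i * s ω i) * ε ω) + ε ω ^ 2) := by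
      intro ω
      have h1 : (∑ i, w i * s ω i) * (∑ j, w j * s ω j)
          = ∑ i, ∑ j, (w i * w j) * (s ω i * s ω j) := by
        rw [Finset.sum_mul_sum]
        exact Finset.sum_congr rfl fun i _ => Finset.sum_congr rfl fun j _ => by ring
      have h2 : (αδ * (∑ i, w i * s ω i) + ε ω) ^ 2
          = αδ ^ 2 * ((∑ i, w i * s ω i) * (∑ j, w j * s ω j))
            + ((2 * αδ) * ((∑ i, w i * s ω i) * ε ω) + ε ω ^ 2) := by ring
      rw [h2, h1, Finset.mul_sum]
      congr 1
      exact Finset.sum_congr rfl fun i _ => by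
        rw [Finset.mul_sum]
        exact Finset.sum_congr rfl fun j _ => by ring
    have I1 : Integrable
        (fun ω => ∑ i, ∑ j, (αδ ^ 2 * (w i * w j)) * (s ω i * s ω j)) μ :=
      integrable_finset_sum _ fun i _ => integrable_finset_sum _ fun j _ =>
        (hint_ss i j).const_mul _
    have I2 : Integrable (fun ω => (2 * αδ) * ((∑ i, w i * s ω i) * ε ω) + ε ω ^ 2) μ :=
      (hint_Tε.const_mul _).add hε2.integrable_sq
    simp only [hpt]
    rw [integral_add I1 I2,
      integral_add (hint_Tε.const_mul _) hε2.integrable_sq,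
      integral_const_mul, hTε, mul_zero, zero_add, hεvar,
      integral_finset_sum _ (fun i _ => integrable_finset_sum _ fun j _ =>
        (hint_ss i j).const_mul _)]
    have : ∀ i, ∫ ω, ∑ j, (αδ ^ 2 * (w i * w j)) * (s ω i * s ω j) ∂μ
        = αδ ^ 2 * w i ^ 2 := by
      intro i
      rw [integral_finset_sum _ fun j _ => (hint_ss i j).const_mul _]
      have : ∀ j, ∫ ω, (αδ ^ 2 * (w i * w j)) * (s ω i * s ω j) ∂μ
          = (αδ ^ 2 * (w i * w j)) * (if i = j then 1 else 0) := by
        intro j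
        rw [integral_const_mul, hscov i j]
      simp only [this, mul_ite, mul_one, mul_zero, Finset.sum_ite_eq, Finset.mem_univ, if_true]
      ring
    simp only [this, ← Finset.mul_sum, hw, mul_one]
  refine ⟨hcov, ?_⟩
  rw [hcov, hvarY, hvarR]
  norm_num [← pow_mul]
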